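/- Let d > 1, p ∈ (1,∞), s ∈ (0,1), and let D ⊂ ℝ^d be an open set with nonempty complement which admits the Hardy-type inequality: there is a constant c_H such that ∫_D |u(x)|^p / dist(x, D^c)^{sp} dx ≤ c_H |u|_{X^{s,p}(D)}^p for all u ∈ (C^1_c(D))^d. Assume also the whole-space fractional Korn inequality: |v|_{W^{s,p}(ℝ^d)}^p ≤ C_K |v|_{X^{s,p}(ℝ^d)}^p for all v ∈ (C^1_c(ℝ^d))^d (and for compactly supported v with finite seminorms). Then there exists a constant C ≥ 1 such that C |u|_{X^{s,p}(D)} ≥ |u|_{W^{s,p}(D)} for every u ∈ (C^1_c(D))^d. -/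

import Mathlib

open MeasureTheory ENNReal NNReal RealInnerProductSpace Filter

noncomputable section

abbrev Euc (d : ℕ) : Type := EuclideanSpace ℝ (Fin d)

/-- `∫_D ‖u‖^p` as an extended nonnegative real. -/
def lpIntP (d : ℕ) (p : ℝ) (D : Set (Euc d)) (u : Euc d → Euc d) : ℝ≥0∞ :=
  ∫⁻ x in D, (‖u x‖₊ : ℝ≥0∞) ^ p

/-- The `p`-th power of the fractional Sobolev (Gagliardo) seminorm `|u|_{W^{s,p}(D)}`. -/
def wSemiP (d : ℕ) (s p : ℝ) (D : Set (Euc d)) (u : Euc d → Euc d) : ℝ≥0∞ :=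
  ∫⁻ x in D, ∫⁻ y in D,
    (‖u x - u y‖₊ : ℝ≥0∞) ^ p / (‖x - y‖₊ : ℝ≥0∞) ^ ((d : ℝ) + s * p)

/-- The `p`-th power of the projected seminorm `|u|_{X^{s,p}(D)}`. -/
def xSemiP (d : ℕ) (s p : ℝ) (D : Set (Euc d)) (u : Euc d → Euc d) : ℝ≥0∞ :=
  ∫⁻ x in D, ∫⁻ y in D,
    ENNReal.ofReal (|(inner ℝ (u x - u y) (x - y) : ℝ)| / ‖x - y‖) ^ p
      / (‖x - y‖₊ : ℝ≥0∞) ^ ((d : ℝ) + s * p)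

/-- The norm `‖u‖_{W^{s,p}(D)}`. -/
def wNorm (d : ℕ) (s p : ℝ) (D : Set (Euc d)) (u : Euc d → Euc d) : ℝ≥0∞ :=
  (lpIntP d p D u + wSemiP d s p D u) ^ (1 / p)

/-- The norm `‖u‖_{X^{s,p}(D)}`. -/
def xNorm (d : ℕ) (s p : ℝ) (D : Set (Euc d)) (u : Euc d → Euc d) : ℝ≥0∞ :=
  (lpIntP d p D u + xSemiP d s p D u) ^ (1 / p)

/-- The class `(C^1_c(D))^d` of continuously differentiable vector fields compactly
supported in `D` (viewed as functions on all of `ℝ^d`, extended by zero). -/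
def C1c (d : ℕ) (D : Set (Euc d)) : Set (Euc d → Euc d) :=
  {u | ContDiff ℝ 1 u ∧ HasCompactSupport u ∧ tsupport u ⊆ D}

/-- `W_0^{s,p}(D)`: the closure of `(C^1_c(D))^d` in the norm `‖·‖_{W^{s,p}(D)}`. -/
def W0 (d : ℕ) (s p : ℝ) (D : Set (Euc d)) : Set (Euc d → Euc d) :=
  {u | Measurable u ∧ wNorm d s p D u ≠ ⊤ ∧
    ∃ v : ℕ → Euc d → Euc d, (∀ n, v n ∈ C1c d D) ∧
      Tendsto (fun n => wNorm d s p D (v n - u)) atTop (nhds 0)}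

/-- `X_0^{s,p}(D)`: the closure of `(C^1_c(D))^d` in the norm `‖·‖_{X^{s,p}(D)}`. -/
def X0 (d : ℕ) (s p : ℝ) (D : Set (Euc d)) : Set (Euc d → Euc d) :=
  {u | Measurable u ∧ xNorm d s p D u ≠ ⊤ ∧
    ∃ v : ℕ → Euc d → Euc d, (∀ n, v n ∈ C1c d D) ∧
      Tendsto (fun n => xNorm d s p D (v n - u)) atTop (nhds 0)}

/-- The first `d-1` coordinates `x'` of a point `x ∈ ℝ^d`. -/
def proj' (d : ℕ) (x : Euc d) : Euc (d - 1) :=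
  WithLp.toLp 2 fun i => x (Fin.castLE (Nat.sub_le d 1) i)

/-- The epigraph `{(x', x_d) : x_d > f(x')}` of `f : ℝ^{d-1} → ℝ`. -/
def epigraph (d : ℕ) (hd : 0 < d) (f : Euc (d - 1) → ℝ) : Set (Euc d) :=
  {x | f (proj' d x) < x ⟨d - 1, Nat.sub_lt hd Nat.one_pos⟩}

/-- The upper half-space `ℝ^d_+`. -/
def halfSpace (d : ℕ) (hd : 0 < d) : Set (Euc d) :=
  {x | 0 < x ⟨d - 1, Nat.sub_lt hd Nat.one_pos⟩}

/-- `D` is a Lipschitz open set with constant `L`. -/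
def IsLipschitzSet (d : ℕ) (hd : 0 < d) (L : ℝ) (D : Set (Euc d)) : Prop :=
  ∃ (n : ℕ) (z : Fin n → Euc d) (r : Fin n → ℝ)
    (f : Fin n → Euc (d - 1) → ℝ) (R : Fin n → (Euc d ≃ᵢ Euc d)),
    (∀ i, z i ∈ frontier D) ∧ (∀ i, 0 < r i) ∧
    (∀ i, LipschitzWith (Real.toNNReal L) (f i)) ∧
    frontier D ⊆ ⋃ i, Metric.ball (z i) (r i) ∧
    (∀ i, R i '' (Metric.ball (z i) (r i) ∩ D) ⊆ epigraph d hd (f i)) ∧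
    (∀ i, R i '' (Metric.ball (z i) (r i) ∩ frontier D)
        = R i '' Metric.ball (z i) (r i) ∩ frontier (epigraph d hd (f i)))

/-- `D` is a `C^1` open set. -/
def IsC1Set (d : ℕ) (hd : 0 < d) (D : Set (Euc d)) : Prop :=
  ∃ (n : ℕ) (z : Fin n → Euc d) (r : Fin n → ℝ)
    (f : Fin n → Euc (d - 1) → ℝ) (R : Fin n → (Euc d ≃ᵢ Euc d)),
    (∀ i, z i ∈ frontier D) ∧ (∀ i, 0 < r i) ∧
    (∀ i, ContDiff ℝ 1 (f i)) ∧
    frontier D ⊆ ⋃ i, Metric.ball (z i) (r i) ∧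
    (∀ i, R i '' (Metric.ball (z i) (r i) ∩ D) ⊆ epigraph d hd (f i)) ∧
    (∀ i, R i '' (Metric.ball (z i) (r i) ∩ frontier D)
        = R i '' Metric.ball (z i) (r i) ∩ frontier (epigraph d hd (f i)))

/-- The constant `C(L) = √(1 + L(L+1))`. -/
def CL (L : ℝ) : ℝ := Real.sqrt (1 + L * (L + 1))

/-- The graph-flattening map `T(x', x_d) = (x', x_d - f(x'))`. -/
def flatten (d : ℕ) (f : Euc (d - 1) → ℝ) (x : Euc d) : Euc d :=
  WithLp.toLp 2 fun i => if (i : ℕ) = d - 1 then x i - f (proj' d x) else x i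

/-- The inverse map `T⁻¹(w', w_d) = (w', w_d + f(w'))`. -/
def shiftGraph (d : ℕ) (f : Euc (d - 1) → ℝ) (w : Euc d) : Euc d :=
  WithLp.toLp 2 fun i => if (i : ℕ) = d - 1 then w i + f (proj' d w) else w i

/-- The `p`-th power of the fractional Sobolev seminorm of a scalar function. -/
def wSemiPScalar (d : ℕ) (s p : ℝ) (D : Set (Euc d)) (g : Euc d → ℝ) : ℝ≥0∞ :=
  ∫⁻ x in D, ∫⁻ y in D,
    (‖g x - g y‖₊ : ℝ≥0∞) ^ p / (‖x - y‖₊ : ℝ≥0∞) ^ ((d : ℝ) + s * p)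

/-- `B_δ = {x ∈ B : dist(x, ∂B) > δ}`. -/
def innerSet (d : ℕ) (δ : ℝ) (B : Set (Euc d)) : Set (Euc d) :=
  {x ∈ B | δ < Metric.infDist x (frontier B)}

lemma radial_bound (d : ℕ) (ε : ℝ) (hε : 0 < ε) :
    ∃ A : ℝ≥0∞, A ≠ ⊤ ∧ ∀ (x : Euc d) (δ : ℝ), 0 < δ →
      (∫⁻ y in (Metric.ball x δ)ᶜ, 1 / (‖x - y‖₊ : ℝ≥0∞) ^ ((d : ℝ) + ε))
        ≤ A / ENNReal.ofReal (δ ^ ε) := by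
  set B := volume (Metric.ball (0 : Euc d) 1) with hB
  set a : ℝ≥0∞ := ENNReal.ofReal ((2:ℝ) ^ (-ε)) with ha
  have ha1 : a < 1 := by
    rw [ha, ← ENNReal.ofReal_one]
    exact (ENNReal.ofReal_lt_ofReal_iff_of_nonneg (by positivity)).mpr
      (Real.rpow_lt_one_of_one_lt_of_neg one_lt_two (by linarith))
  have hsum : (∑' k : ℕ, a ^ k) ≠ ⊤ := by
    rw [ENNReal.tsum_geometric]
    exact ENNReal.inv_ne_top.mpr (tsub_pos_of_lt ha1).ne'
  refine ⟨B * ENNReal.ofReal ((2:ℝ) ^ (d:ℝ)) * ∑' k : ℕ, a ^ k, ?_, ?_⟩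
  · exact ENNReal.mul_ne_top (ENNReal.mul_ne_top measure_ball_lt_top.ne ENNReal.ofReal_ne_top) hsum
  intro x δ hδ
  set S : ℕ → Set (Euc d) := fun k =>
    Metric.closedBall x (δ * 2 ^ (k+1)) \ Metric.ball x (δ * 2 ^ k) with hS
  have hcover : (Metric.ball x δ)ᶜ ⊆ ⋃ k : ℕ, S k := by
    intro y hy
    have hyd : δ ≤ dist y x := by
      simpa [Metric.mem_ball, not_lt] using hy
    have hxy : δ ≤ dist x y := by rwa [dist_comm]
    have ht1 : 1 ≤ dist x y / δ := (one_le_div hδ).mpr hxy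
    set t : ℝ := dist x y / δ with ht
    set n : ℕ := ⌊t⌋₊ with hn
    have hn1 : 1 ≤ n := Nat.le_floor (by exact_mod_cast ht1)
    set k : ℕ := Nat.log 2 n with hk
    have h2k : (2:ℕ)^k ≤ n := Nat.pow_log_le_self 2 (by omega)
    have hk2 : n < 2^(k+1) := Nat.lt_pow_succ_log_self (by norm_num) n
    have htlow : (2:ℝ)^k ≤ t := by
      calc ((2:ℝ)^k) = ((2^k : ℕ) : ℝ) := by push_cast; ring
        _ ≤ (n : ℝ) := by exact_mod_cast h2k
        _ ≤ t := Nat.floor_le (by linarith)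
    have hthigh : t ≤ (2:ℝ)^(k+1) := by
      have : t < (n : ℝ) + 1 := Nat.lt_floor_add_one t
      have h2 : ((n : ℝ) + 1) ≤ ((2:ℝ)^(k+1)) := by exact_mod_cast Nat.succ_le_of_lt hk2
      linarith
    have hd1 : δ * 2^k ≤ dist x y := by
      have := mul_le_mul_of_nonneg_left htlow hδ.le
      rwa [ht, mul_div_cancel₀ _ hδ.ne'] at this
    have hd2 : dist x y ≤ δ * 2^(k+1) := by
      have := mul_le_mul_of_nonneg_left hthigh hδ.le
      rwa [ht, mul_div_cancel₀ _ hδ.ne'] at this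
    exact Set.mem_iUnion.mpr ⟨k, by
      simp only [hS, Set.mem_diff, Metric.mem_closedBall, Metric.mem_ball, not_lt, dist_comm y x]
      exact ⟨hd2, hd1⟩⟩
  have hr : (0:ℝ) < (d:ℝ) + ε := by positivity
  have termbd : ∀ k : ℕ, (∫⁻ y in S k, 1 / (‖x - y‖₊ : ℝ≥0∞) ^ ((d : ℝ) + ε))
      ≤ (B * ENNReal.ofReal ((2:ℝ) ^ (d:ℝ)) / ENNReal.ofReal (δ ^ ε)) * a ^ k := by
    intro k
    have h2k : (0:ℝ) < δ * 2^k := by positivity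
    have h2k1 : (0:ℝ) < δ * 2^(k+1) := by positivity
    have hmeas : MeasurableSet (S k) :=
      Metric.isClosed_closedBall.measurableSet.diff Metric.isOpen_ball.measurableSet
    have hpt : ∀ y ∈ S k, 1 / (‖x - y‖₊ : ℝ≥0∞) ^ ((d : ℝ) + ε)
        ≤ 1 / ENNReal.ofReal ((δ * 2^k) ^ ((d:ℝ) + ε)) := by
      intro y hy
      have hyk : δ * 2^k ≤ dist x y := by
        have := hy.2
        simp only [Metric.mem_ball, not_lt, dist_comm y x] at this
        exact this
      have h1 : ENNReal.ofReal (δ * 2^k) ≤ (‖x - y‖₊ : ℝ≥0∞) := by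
        rw [← enorm_eq_nnnorm, ← ofReal_norm_eq_enorm]
        exact ENNReal.ofReal_le_ofReal (by rwa [← dist_eq_norm])
      rw [← ENNReal.ofReal_rpow_of_pos h2k]
      gcongr
    calc (∫⁻ y in S k, 1 / (‖x - y‖₊ : ℝ≥0∞) ^ ((d : ℝ) + ε))
        ≤ ∫⁻ _ in S k, 1 / ENNReal.ofReal ((δ * 2^k) ^ ((d:ℝ) + ε)) :=
          setLIntegral_mono' hmeas hpt
      _ = 1 / ENNReal.ofReal ((δ * 2^k) ^ ((d:ℝ) + ε)) * volume (S k) := setLIntegral_const _ _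
      _ ≤ 1 / ENNReal.ofReal ((δ * 2^k) ^ ((d:ℝ) + ε)) *
            (ENNReal.ofReal ((δ * 2^(k+1)) ^ d) * B) := by
          gcongr
          calc volume (S k) ≤ volume (Metric.closedBall x (δ * 2^(k+1))) :=
                measure_mono Set.diff_subset
            _ = ENNReal.ofReal ((δ * 2^(k+1)) ^ d) * B := by
                rw [Measure.addHaar_closedBall _ _ h2k1.le, hB, finrank_euclideanSpace_fin]
      _ = ENNReal.ofReal ((δ * 2^(k+1)) ^ d / (δ * 2^k) ^ ((d:ℝ) + ε)) * B := by
          rw [ENNReal.ofReal_div_of_pos (by positivity), one_div, div_eq_mul_inv]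
          ring
      _ = (B * ENNReal.ofReal ((2:ℝ) ^ (d:ℝ)) / ENNReal.ofReal (δ ^ ε)) * a ^ k := by
          have key : (δ * 2^(k+1)) ^ d / (δ * 2^k) ^ ((d:ℝ) + ε)
              = (2:ℝ) ^ (d:ℝ) * ((2:ℝ)^(-ε))^k / δ ^ ε := by
            rw [← Real.rpow_natCast (δ*2^(k+1)) d, Real.rpow_add h2k,
              div_mul_eq_div_div, ← Real.div_rpow h2k1.le h2k.le]
            have e4 : δ * 2^(k+1) / (δ * 2^k) = 2 := by
              rw [pow_succ]; field_simp
            rw [e4, Real.mul_rpow hδ.le (by positivity)]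
            have e6 : ((2:ℝ)^k : ℝ)^ε = (((2:ℝ)^(-ε))^k)⁻¹ := by
              rw [← Real.rpow_natCast (2:ℝ) k, ← Real.rpow_natCast ((2:ℝ)^(-ε)) k,
                ← Real.rpow_mul (by norm_num : (0:ℝ) ≤ 2),
                ← Real.rpow_mul (by norm_num : (0:ℝ) ≤ 2),
                ← Real.rpow_neg (by norm_num : (0:ℝ) ≤ 2)]
              congr 1; ring
            rw [e6]
            have hc : (0:ℝ) < ((2:ℝ)^(-ε))^k := by positivity
            field_simp
          rw [key, ENNReal.ofReal_div_of_pos (by positivity), ENNReal.ofReal_mul (by positivity),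
            ENNReal.ofReal_pow (by positivity), ← ha, div_eq_mul_inv, div_eq_mul_inv]
          ring
  calc (∫⁻ y in (Metric.ball x δ)ᶜ, 1 / (‖x - y‖₊ : ℝ≥0∞) ^ ((d : ℝ) + ε))
      ≤ ∫⁻ y in ⋃ k, S k, 1 / (‖x - y‖₊ : ℝ≥0∞) ^ ((d : ℝ) + ε) :=
        lintegral_mono_set hcover
    _ ≤ ∑' k : ℕ, ∫⁻ y in S k, 1 / (‖x - y‖₊ : ℝ≥0∞) ^ ((d : ℝ) + ε) :=
        lintegral_iUnion_le _ _
    _ ≤ ∑' k : ℕ, (B * ENNReal.ofReal ((2:ℝ) ^ (d:ℝ)) / ENNReal.ofReal (δ ^ ε)) * a ^ k :=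
        ENNReal.tsum_le_tsum termbd
    _ = (B * ENNReal.ofReal ((2:ℝ) ^ (d:ℝ)) / ENNReal.ofReal (δ ^ ε)) * ∑' k : ℕ, a ^ k :=
        ENNReal.tsum_mul_left
    _ = B * ENNReal.ofReal ((2:ℝ) ^ (d:ℝ)) * (∑' k : ℕ, a ^ k) / ENNReal.ofReal (δ ^ ε) := by
        rw [div_eq_mul_inv, div_eq_mul_inv]; ring


/-- The integrand of the projected seminorm. -/
def Fker (d : ℕ) (s p : ℝ) (u : Euc d → Euc d) (x y : Euc d) : ℝ≥0∞ :=
  ENNReal.ofReal (|(inner ℝ (u x - u y) (x - y) : ℝ)| / ‖x - y‖) ^ p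
    / (‖x - y‖₊ : ℝ≥0∞) ^ ((d : ℝ) + s * p)

lemma xSemiP_eq (d : ℕ) (s p : ℝ) (D : Set (Euc d)) (u : Euc d → Euc d) :
    xSemiP d s p D u = ∫⁻ x in D, ∫⁻ y in D, Fker d s p u x y := rfl

lemma Fker_symm (d : ℕ) (s p : ℝ) (u : Euc d → Euc d) (x y : Euc d) :
    Fker d s p u x y = Fker d s p u y x := by
  unfold Fker
  rw [← neg_sub (u x) (u y), ← neg_sub x y, inner_neg_neg, norm_neg, nnnorm_neg]

lemma Fker_meas (d : ℕ) (s p : ℝ) (u : Euc d → Euc d) (hu : Continuous u) :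
    Measurable (Function.uncurry (Fker d s p u)) := by
  unfold Function.uncurry Fker
  have hsub : Continuous fun q : Euc d × Euc d => q.1 - q.2 := continuous_fst.sub continuous_snd
  apply Measurable.div
  · apply (ENNReal.continuous_rpow_const.measurable).comp
    apply Measurable.ennreal_ofReal
    apply Measurable.div
    · exact (Continuous.abs (Continuous.inner
        ((hu.comp continuous_fst).sub (hu.comp continuous_snd)) hsub)).measurable
    · exact hsub.norm.measurable
  · exact (ENNReal.continuous_rpow_const.comp (ENNReal.continuous_coe.comp hsub.nnnorm)).measurable

lemma double_split {d : ℕ} {f : Euc d → Euc d → ℝ≥0∞} (hf : Measurable (Function.uncurry f))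
    {T : Set (Euc d)} (hT : MeasurableSet T) :
    ∫⁻ x, ∫⁻ y, f x y = (∫⁻ x in T, ∫⁻ y in T, f x y) + (∫⁻ x in T, ∫⁻ y in Tᶜ, f x y)
      + ((∫⁻ x in Tᶜ, ∫⁻ y in T, f x y) + ∫⁻ x in Tᶜ, ∫⁻ y in Tᶜ, f x y) := by
  have h1 : ∀ x, ∫⁻ y, f x y = (∫⁻ y in T, f x y) + ∫⁻ y in Tᶜ, f x y :=
    fun x => (lintegral_add_compl (f x) hT).symm
  have hm1 : Measurable fun x => ∫⁻ y in T, f x y := hf.lintegral_prod_right'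
  rw [lintegral_congr h1, lintegral_add_left hm1,
    ← lintegral_add_compl (fun x => ∫⁻ y in T, f x y) hT,
    ← lintegral_add_compl (fun x => ∫⁻ y in Tᶜ, f x y) hT]
  ring

lemma cross_swap {d : ℕ} {f : Euc d → Euc d → ℝ≥0∞} (hf : Measurable (Function.uncurry f))
    (hsymm : ∀ x y, f x y = f y x) {T : Set (Euc d)} :
    ∫⁻ x in Tᶜ, ∫⁻ y in T, f x y = ∫⁻ x in T, ∫⁻ y in Tᶜ, f x y := by
  have h1 : ∀ x, (∫⁻ y in T, f x y) = ∫⁻ y in T, f y x :=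
    fun x => lintegral_congr fun y => hsymm x y
  rw [lintegral_congr h1]
  exact lintegral_lintegral_swap ((hf.comp measurable_swap).aemeasurable)


theorem stmt12 (d : ℕ) (hd : 1 < d) (p s : ℝ) (hp : 1 < p) (hs0 : 0 < s) (hs1 : s < 1)
    (D : Set (Euc d)) (hD : IsOpen D) (hDc : Dᶜ.Nonempty) (cH CK : ℝ)
    (hHardy : ∀ u ∈ C1c d D,
      (∫⁻ x in D, (‖u x‖₊ : ℝ≥0∞) ^ p / ENNReal.ofReal (Metric.infDist x Dᶜ ^ (s * p)))
        ≤ ENNReal.ofReal cH * xSemiP d s p D u)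
    (hKorn : ∀ v : Euc d → Euc d, Measurable v → HasCompactSupport v →
      xSemiP d s p Set.univ v ≠ ⊤ →
      wSemiP d s p Set.univ v ≤ ENNReal.ofReal CK * xSemiP d s p Set.univ v) :
    ∃ C : ℝ, 1 ≤ C ∧ ∀ u ∈ C1c d D,
      wSemiP d s p D u ^ (1 / p) ≤ ENNReal.ofReal C * xSemiP d s p D u ^ (1 / p) := by
  
  have hp0 : (0:ℝ) < p := by linarith
  have hsp : (0:ℝ) < s * p := mul_pos hs0 hp0
  obtain ⟨A, hA, hAbd⟩ := radial_bound d (s*p) hsp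
  set M : ℝ≥0∞ := ENNReal.ofReal CK * (1 + 2 * A * ENNReal.ofReal cH) with hM
  have hMne : M ≠ ⊤ := by
    apply ENNReal.mul_ne_top ENNReal.ofReal_ne_top
    refine ENNReal.add_ne_top.mpr ⟨ENNReal.one_ne_top, ?_⟩
    exact ENNReal.mul_ne_top (ENNReal.mul_ne_top (by simp) hA) ENNReal.ofReal_ne_top
  refine ⟨max 1 (M ^ (1/p)).toReal, le_max_left _ _, ?_⟩
  intro u hu
  obtain ⟨husmooth, hucs, husupp⟩ := hu
  have hucont : Continuous u := husmooth.continuous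
  have hC0 : (0:ℝ) < max 1 (M ^ (1/p)).toReal := lt_of_lt_of_le one_pos (le_max_left _ _)
  by_cases hX : xSemiP d s p D u = ⊤
  · rw [hX, ENNReal.top_rpow_of_pos (by positivity : (0:ℝ) < 1/p), ENNReal.mul_top
      (by simp [ENNReal.ofReal_eq_zero, not_le, hC0])]
    exact le_top
  -- notation
  have hDm : MeasurableSet D := hD.measurableSet
  have hFm := Fker_meas d s p u hucont
  have hu0 : ∀ z, z ∉ D → u z = 0 := fun z hz =>
    image_eq_zero_of_notMem_tsupport (fun h => hz (husupp h))
  have hδpos : ∀ x ∈ D, 0 < Metric.infDist x Dᶜ := by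
    intro x hx
    exact ((hD.isClosed_compl).notMem_iff_infDist_pos hDc).mp (by simpa using hx)
  -- pointwise bound on the cross term
  have hFbd : ∀ x, ∀ y ∉ D, Fker d s p u x y
      ≤ (‖u x‖₊ : ℝ≥0∞) ^ p * (1 / (‖x - y‖₊ : ℝ≥0∞) ^ ((d:ℝ) + s * p)) := by
    intro x y hy
    have h0 : u y = 0 := hu0 y hy
    have hq : |(inner ℝ (u x - u y) (x - y) : ℝ)| / ‖x - y‖ ≤ ‖u x‖ := by
      rw [h0, sub_zero]
      rcases eq_or_ne (‖x - y‖) 0 with h | h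
      · simp [h]
      · rw [div_le_iff₀ (lt_of_le_of_ne (norm_nonneg _) (Ne.symm h))]
        exact abs_real_inner_le_norm _ _
    have h1 : Fker d s p u x y
        ≤ (‖u x‖₊ : ℝ≥0∞) ^ p / (‖x - y‖₊ : ℝ≥0∞) ^ ((d:ℝ) + s * p) := by
      unfold Fker
      gcongr
      exact le_trans (ENNReal.ofReal_le_ofReal hq) (le_of_eq (ofReal_norm_eq_enorm _))
    rwa [mul_one_div]
  -- bound on the inner cross integral
  have hinner : ∀ x ∈ D, (∫⁻ y in Dᶜ, Fker d s p u x y)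
      ≤ A * ((‖u x‖₊ : ℝ≥0∞) ^ p / ENNReal.ofReal (Metric.infDist x Dᶜ ^ (s*p))) := by
    intro x hx
    have hδ := hδpos x hx
    have hsub : Dᶜ ⊆ (Metric.ball x (Metric.infDist x Dᶜ))ᶜ := by
      intro y hy
      simp only [Set.mem_compl_iff, Metric.mem_ball, not_lt]
      calc Metric.infDist x Dᶜ ≤ dist x y := Metric.infDist_le_dist_of_mem hy
        _ = dist y x := dist_comm x y
    calc (∫⁻ y in Dᶜ, Fker d s p u x y)
        ≤ ∫⁻ y in Dᶜ, (‖u x‖₊ : ℝ≥0∞) ^ p * (1 / (‖x - y‖₊ : ℝ≥0∞) ^ ((d:ℝ) + s * p)) :=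
          setLIntegral_mono' hDm.compl (fun y hy => hFbd x y hy)
      _ = (‖u x‖₊ : ℝ≥0∞) ^ p * ∫⁻ y in Dᶜ, 1 / (‖x - y‖₊ : ℝ≥0∞) ^ ((d:ℝ) + s * p) :=
          lintegral_const_mul' _ _
            (ENNReal.rpow_ne_top_of_nonneg hp0.le ENNReal.coe_ne_top)
      _ ≤ (‖u x‖₊ : ℝ≥0∞) ^ p * (A / ENNReal.ofReal (Metric.infDist x Dᶜ ^ (s*p))) := by
          gcongr
          exact le_trans (lintegral_mono_set hsub) (hAbd x _ hδ)
      _ = A * ((‖u x‖₊ : ℝ≥0∞) ^ p / ENNReal.ofReal (Metric.infDist x Dᶜ ^ (s*p))) := by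
          rw [div_eq_mul_inv, div_eq_mul_inv]; ring
  -- the full cross term
  have hcross : (∫⁻ x in D, ∫⁻ y in Dᶜ, Fker d s p u x y)
      ≤ A * (ENNReal.ofReal cH * xSemiP d s p D u) := by
    calc (∫⁻ x in D, ∫⁻ y in Dᶜ, Fker d s p u x y)
        ≤ ∫⁻ x in D, A * ((‖u x‖₊ : ℝ≥0∞) ^ p / ENNReal.ofReal (Metric.infDist x Dᶜ ^ (s*p))) :=
          setLIntegral_mono' hDm hinner
      _ = A * ∫⁻ x in D, (‖u x‖₊ : ℝ≥0∞) ^ p / ENNReal.ofReal (Metric.infDist x Dᶜ ^ (s*p)) :=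
          lintegral_const_mul' _ _ hA
      _ ≤ A * (ENNReal.ofReal cH * xSemiP d s p D u) := by
          gcongr
          exact hHardy u ⟨husmooth, hucs, husupp⟩
  -- the outside-outside term vanishes
  have hzero : (∫⁻ x in Dᶜ, ∫⁻ y in Dᶜ, Fker d s p u x y) = 0 := by
    have hFz : ∀ x ∈ Dᶜ, (∫⁻ y in Dᶜ, Fker d s p u x y) = 0 := by
      intro x hx
      have : ∀ y ∈ Dᶜ, Fker d s p u x y = 0 := by
        intro y hy
        unfold Fker
        rw [hu0 x hx, hu0 y hy, sub_zero]
        simp [ENNReal.zero_rpow_of_pos hp0]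
      rw [setLIntegral_congr_fun hDm.compl this]
      simp
    rw [setLIntegral_congr_fun hDm.compl hFz]
    simp
  -- decomposition of the whole-space seminorm
  have hXuniv : xSemiP d s p Set.univ u
      = xSemiP d s p D u + 2 * ∫⁻ x in D, ∫⁻ y in Dᶜ, Fker d s p u x y := by
    rw [xSemiP_eq, Measure.restrict_univ]
    rw [double_split hFm hDm, cross_swap hFm (Fker_symm d s p u), hzero, xSemiP_eq]
    ring
  -- finiteness and the final chain
  have hXle : xSemiP d s p Set.univ u
      ≤ (1 + 2 * A * ENNReal.ofReal cH) * xSemiP d s p D u := by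
    rw [hXuniv]
    calc xSemiP d s p D u + 2 * ∫⁻ x in D, ∫⁻ y in Dᶜ, Fker d s p u x y
        ≤ xSemiP d s p D u + 2 * (A * (ENNReal.ofReal cH * xSemiP d s p D u)) := by gcongr
      _ = (1 + 2 * A * ENNReal.ofReal cH) * xSemiP d s p D u := by ring
  have hXuniv_ne : xSemiP d s p Set.univ u ≠ ⊤ := by
    refine ne_top_of_le_ne_top ?_ hXle
    exact ENNReal.mul_ne_top (ENNReal.add_ne_top.mpr ⟨ENNReal.one_ne_top,
      ENNReal.mul_ne_top (ENNReal.mul_ne_top (by simp) hA) ENNReal.ofReal_ne_top⟩) hX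
  have hWmono : wSemiP d s p D u ≤ wSemiP d s p Set.univ u := by
    unfold wSemiP
    calc (∫⁻ x in D, ∫⁻ y in D, (‖u x - u y‖₊ : ℝ≥0∞) ^ p
            / (‖x - y‖₊ : ℝ≥0∞) ^ ((d : ℝ) + s * p))
        ≤ ∫⁻ x in D, ∫⁻ y in Set.univ, (‖u x - u y‖₊ : ℝ≥0∞) ^ p
            / (‖x - y‖₊ : ℝ≥0∞) ^ ((d : ℝ) + s * p) :=
          lintegral_mono fun x => lintegral_mono_set (Set.subset_univ D)
      _ ≤ ∫⁻ x in Set.univ, ∫⁻ y in Set.univ, (‖u x - u y‖₊ : ℝ≥0∞) ^ p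
            / (‖x - y‖₊ : ℝ≥0∞) ^ ((d : ℝ) + s * p) :=
          lintegral_mono_set (Set.subset_univ D)
  have key : wSemiP d s p D u ≤ M * xSemiP d s p D u := by
    calc wSemiP d s p D u ≤ wSemiP d s p Set.univ u := hWmono
      _ ≤ ENNReal.ofReal CK * xSemiP d s p Set.univ u :=
          hKorn u hucont.measurable hucs hXuniv_ne
      _ ≤ ENNReal.ofReal CK * ((1 + 2 * A * ENNReal.ofReal cH) * xSemiP d s p D u) := by
          gcongr
      _ = M * xSemiP d s p D u := by rw [hM]; ring
  calc wSemiP d s p D u ^ (1/p)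
      ≤ (M * xSemiP d s p D u) ^ (1/p) := ENNReal.rpow_le_rpow key (by positivity)
    _ = M ^ (1/p) * xSemiP d s p D u ^ (1/p) := ENNReal.mul_rpow_of_nonneg _ _ (by positivity)
    _ ≤ ENNReal.ofReal (max 1 (M ^ (1/p)).toReal) * xSemiP d s p D u ^ (1/p) := by
        gcongr
        have hne : M ^ (1/p) ≠ ⊤ := ENNReal.rpow_ne_top_of_nonneg (by positivity) hMne
        calc M ^ (1/p) = ENNReal.ofReal ((M ^ (1/p)).toReal) := (ENNReal.ofReal_toReal hne).symm
          _ ≤ ENNReal.ofReal (max 1 (M ^ (1/p)).toReal) :=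
            ENNReal.ofReal_le_ofReal (le_max_right _ _)
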